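/- (Generalized Chung's lemma.) Let s, t : ℝ → (0,∞) and let {a_k} ⊂ ℝ and {b_k} ⊂ ℝ be sequences with a_{k+1} ≤ (1 − 1/s(b_k))·a_k + 1/t(b_k) for all k. Assume: (i) there is ι ∈ ℝ such that s and t are continuously differentiable on I := (ι,∞) and s(x) > 1 for all x ∈ I, and the mapping κ := s/t is non-increasing and convex on I; (ii) b_k → ∞ and there are B > 0 and K ∈ ℕ with b_{k+1} ≤ b_k + B for all k ≥ K, and Σ_{k=0}^∞ 1/s(b_k) = ∞; (iii) there is β ∈ (0,1) such that B·(s′(x) − κ(x)·t′(x)) ≥ −1 + β for all x ∈ I. Then limsup_{k→∞} a_k/κ(b_k) < ∞. -/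

import Mathlib

open MeasureTheory Filter Real Set Topology
open scoped ENNReal NNReal

/-- Generalized Chung's lemma. -/
theorem generalized_chung (s t : ℝ → ℝ) (hs : ∀ x, 0 < s x) (ht : ∀ x, 0 < t x)
    (a b : ℕ → ℝ)
    (hrec : ∀ k, a (k + 1) ≤ (1 - 1 / s (b k)) * a k + 1 / t (b k))
    (ι : ℝ) (s' t' : ℝ → ℝ)
    (hs' : ∀ x ∈ Set.Ioi ι, HasDerivAt s (s' x) x)
    (ht' : ∀ x ∈ Set.Ioi ι, HasDerivAt t (t' x) x)
    (hs'cont : ContinuousOn s' (Set.Ioi ι)) (ht'cont : ContinuousOn t' (Set.Ioi ι))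
    (hs1 : ∀ x ∈ Set.Ioi ι, 1 < s x)
    (hκanti : AntitoneOn (fun x => s x / t x) (Set.Ioi ι))
    (hκconv : ConvexOn ℝ (Set.Ioi ι) (fun x => s x / t x))
    (hb : Tendsto b atTop atTop)
    (B : ℝ) (hB : 0 < B) (K : ℕ) (hbB : ∀ k ≥ K, b (k + 1) ≤ b k + B)
    (hsdiv : Tendsto (fun N => ∑ k ∈ Finset.range N, 1 / s (b k)) atTop atTop)
    (β : ℝ) (hβ : β ∈ Set.Ioo (0 : ℝ) 1)
    (hderiv : ∀ x ∈ Set.Ioi ι, B * (s' x - (s x / t x) * t' x) ≥ -1 + β) :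
    IsBoundedUnder (· ≤ ·) atTop (fun k => a k / (s (b k) / t (b k))) := by
  obtain ⟨hβ0, hβ1⟩ := hβ
  set κ : ℝ → ℝ := fun x => s x / t x with hκdef
  have hκpos : ∀ x, 0 < κ x := fun x => div_pos (hs x) (ht x)
  -- Key pointwise inequality from convexity and the derivative bound
  have key : ∀ x ∈ Set.Ioi ι, κ x * (1 - (1 - β) / s x) ≤ κ (x + B) := by
    intro x hx
    have hx' : ι < x := hx
    have hxB : x + B ∈ Set.Ioi ι := by simp only [Set.mem_Ioi]; linarith
    have htx : t x ≠ 0 := (ht x).ne'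
    have hsx : s x ≠ 0 := (hs x).ne'
    have hder : HasDerivAt κ ((s' x * t x - s x * t' x) / (t x) ^ 2) x := by
      exact ((hs' x hx).div (ht' x hx) htx)
    have hslope := hκconv.le_slope_of_hasDerivAt hx hxB (by linarith) hder
    have hsl : slope κ x (x + B) = (κ (x + B) - κ x) / B := by
      rw [slope_def_field]; ring_nf
    rw [hsl] at hslope
    have h1 : B * ((s' x * t x - s x * t' x) / (t x) ^ 2) ≤ κ (x + B) - κ x := by
      have := (le_div_iff₀ hB).mp hslope
      linarith
    have h2 := hderiv x hx
    have h3 : (β - 1) / t x ≤ B * ((s' x * t x - s x * t' x) / (t x) ^ 2) := by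
      have e : B * ((s' x * t x - s x * t' x) / (t x) ^ 2)
          = (B * (s' x - (s x / t x) * t' x)) / t x := by
        field_simp
      rw [e]
      have : β - 1 ≤ B * (s' x - (s x / t x) * t' x) := by linarith
      exact div_le_div_of_nonneg_right this (ht x).le
    have h4 : κ x + (β - 1) / t x ≤ κ (x + B) := by linarith
    have e2 : κ x * (1 - (1 - β) / s x) = κ x + (β - 1) / t x := by
      simp only [hκdef]; field_simp; ring
    linarith
  -- Choose N beyond which b k > ι and k ≥ K
  have hev : ∀ᶠ k in atTop, ι < b k ∧ K ≤ k :=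
    (hb.eventually_gt_atTop ι).and (eventually_ge_atTop K)
  obtain ⟨N, hN⟩ := eventually_atTop.mp hev
  set M : ℝ := max (a N / κ (b N)) (1 / β) with hMdef
  have hM : 1 / β ≤ M := le_max_right _ _
  have hMpos : 0 < M := lt_of_lt_of_le (by positivity) hM
  have hMβ : 1 ≤ M * β := by
    have := (div_le_iff₀ hβ0).mp hM
    linarith
  have bound : ∀ k ≥ N, a k / κ (b k) ≤ M := by
    intro k hk
    induction k, hk using Nat.le_induction with
    | base => exact le_max_left _ _
    | succ k hk ih =>
      obtain ⟨hbk, hKk⟩ := hN k hk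
      have hbk1 : ι < b (k + 1) := (hN (k + 1) (le_trans hk (Nat.le_succ k))).1
      have hsk : 1 < s (b k) := hs1 (b k) hbk
      have hκ1 : κ (b k) * (1 - (1 - β) / s (b k)) ≤ κ (b k + B) := key _ hbk
      have hκ2 : κ (b k + B) ≤ κ (b (k + 1)) :=
        hκanti (Set.mem_Ioi.mpr hbk1) (Set.mem_Ioi.mpr (by linarith : ι < b k + B))
          (hbB k hKk)
      have hak : a k ≤ M * κ (b k) := (div_le_iff₀ (hκpos _)).mp ih
      have h1t : 1 / t (b k) = κ (b k) / s (b k) := by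
        simp only [hκdef]
        rw [div_div, mul_comm, ← div_div, div_self (hs (b k)).ne']
      have hκk := hκpos (b k)
      have hsk0 : 0 < s (b k) := hs (b k)
      have h5 : a (k + 1) ≤ M * (κ (b k) * (1 - (1 - β) / s (b k))) := by
        have hrk := hrec k
        rw [h1t] at hrk
        have hfac : (0:ℝ) ≤ 1 - 1 / s (b k) := by
          have : 1 / s (b k) ≤ 1 := by
            rw [div_le_one hsk0]; linarith
          linarith
        have step1 : (1 - 1 / s (b k)) * a k ≤ (1 - 1 / s (b k)) * (M * κ (b k)) :=
          mul_le_mul_of_nonneg_left hak hfac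
        have step2 : (1 - 1 / s (b k)) * (M * κ (b k)) + κ (b k) / s (b k)
            ≤ M * (κ (b k) * (1 - (1 - β) / s (b k))) := by
          have hpos : 0 < κ (b k) / s (b k) := div_pos hκk hsk0
          have : M * (κ (b k) * (1 - (1 - β) / s (b k)))
              - ((1 - 1 / s (b k)) * (M * κ (b k)) + κ (b k) / s (b k))
              = (κ (b k) / s (b k)) * (M * β - 1) := by
            field_simp; ring
          nlinarith
        linarith
      have h6 : a (k + 1) ≤ M * κ (b (k + 1)) :=
        h5.trans (mul_le_mul_of_nonneg_left (hκ1.trans hκ2) hMpos.le)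
      exact (div_le_iff₀ (hκpos _)).mpr h6
  exact ⟨M, eventually_map.mpr (eventually_atTop.mpr ⟨N, bound⟩)⟩
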